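/- Let q be a prime power, and let t, d, m be positive integers with d ≥ m − 1. For any m distinct points X_1, …, X_m ∈ F_q^t, the number of polynomials f ∈ P_d(t) satisfying f(X_i) = 0 for every i = 1, …, m equals |P_d(t)| / q^m; equivalently, a uniformly random f ∈ P_d(t) vanishes at all of X_1, …, X_m with probability exactly q^{−m}. -/
import Mathlib

open MvPolynomial

section Aux
open scoped Classical

variable {F : Type} [Field F] {t m : ℕ}

/-- A Lagrange-type polynomial: 1 at `X i`, 0 at `X j` for `j ≠ i`. -/
noncomputable def lagPoly (X : Fin m → (Fin t → F)) (i : Fin m) : MvPolynomial (Fin t) F :=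
  ∏ j ∈ Finset.univ.erase i,
    if h : X i ≠ X j then
      MvPolynomial.C (X i (Function.ne_iff.mp h).choose - X j (Function.ne_iff.mp h).choose)⁻¹ *
        (MvPolynomial.X (Function.ne_iff.mp h).choose -
          MvPolynomial.C (X j (Function.ne_iff.mp h).choose))
    else 1

theorem lagPoly_totalDegree (X : Fin m → (Fin t → F)) (i : Fin m) :
    (lagPoly X i).totalDegree ≤ m - 1 := by
  refine le_trans (totalDegree_finset_prod _ _) ?_
  have : ∀ j ∈ Finset.univ.erase i,
      (if h : X i ≠ X j then
        MvPolynomial.C (X i (Function.ne_iff.mp h).choose - X j (Function.ne_iff.mp h).choose)⁻¹ *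
          (MvPolynomial.X (Function.ne_iff.mp h).choose -
            MvPolynomial.C (X j (Function.ne_iff.mp h).choose))
      else 1).totalDegree ≤ 1 := by
    intro j _
    split_ifs with h
    · refine le_trans (totalDegree_mul _ _) ?_
      simp only [totalDegree_C, zero_add]
      refine le_trans (totalDegree_sub_C_le _ _) ?_
      simp [totalDegree_X]
    · simp
  calc ∑ j ∈ Finset.univ.erase i, _ ≤ ∑ _j ∈ Finset.univ.erase i, 1 :=
        Finset.sum_le_sum this
    _ = (Finset.univ.erase i).card := by simp
    _ ≤ m - 1 := by
        rw [Finset.card_erase_of_mem (Finset.mem_univ i)]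
        simp

theorem lagPoly_eval_self (X : Fin m → (Fin t → F)) (hX : Function.Injective X) (i : Fin m) :
    MvPolynomial.eval (X i) (lagPoly X i) = 1 := by
  rw [lagPoly, map_prod]
  refine Finset.prod_eq_one fun j hj => ?_
  have hij : X i ≠ X j := fun h => (Finset.mem_erase.mp hj).1 (hX h).symm
  rw [dif_pos hij]
  have hk := (Function.ne_iff.mp hij).choose_spec
  simp [inv_mul_cancel₀ (sub_ne_zero_of_ne hk)]

theorem lagPoly_eval_ne (X : Fin m → (Fin t → F)) (hX : Function.Injective X)
    {i j : Fin m} (hij : j ≠ i) :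
    MvPolynomial.eval (X j) (lagPoly X i) = 0 := by
  rw [lagPoly, map_prod]
  refine Finset.prod_eq_zero (Finset.mem_erase.mpr ⟨hij, Finset.mem_univ j⟩) ?_
  have hij' : X i ≠ X j := fun h => hij (hX h.symm)
  rw [dif_pos hij']
  simp

end Aux

/-- over a finite field `F` with `q` elements (`q` a prime power), for
positive `t, d, m` with `d ≥ m − 1`, and any `m` distinct points `X₁,…,X_m ∈ F^t`,
the number of `t`-variable polynomials of total degree at most `d` vanishing at all the
`X_i` equals `|P_d(t)| / q^m`. -/
theorem statement5 (F : Type) [Field F] [Fintype F] (t d m : ℕ)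
    (ht : 1 ≤ t) (hd : 1 ≤ d) (hm : 1 ≤ m) (hdm : m - 1 ≤ d)
    (X : Fin m → (Fin t → F)) (hX : Function.Injective X) :
    {f : MvPolynomial (Fin t) F | f.totalDegree ≤ d ∧
        ∀ i : Fin m, MvPolynomial.eval (X i) f = 0}.ncard * Fintype.card F ^ m
      = {f : MvPolynomial (Fin t) F | f.totalDegree ≤ d}.ncard := by
  classical
  set M := restrictTotalDegree (Fin t) F d with hM
  -- evaluation linear map
  let L : M →ₗ[F] (Fin m → F) :=
    { toFun := fun f i => MvPolynomial.eval (X i) (f : MvPolynomial (Fin t) F)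
      map_add' := by intro f g; ext i; simp
      map_smul' := by intro c f; ext i; simp [MvPolynomial.smul_eval] }
  have hLsurj : Function.Surjective L := by
    intro v
    refine ⟨⟨∑ i, MvPolynomial.C (v i) * lagPoly X i, ?_⟩, ?_⟩
    · rw [mem_restrictTotalDegree]
      refine le_trans (totalDegree_finset_sum _ _) ?_
      refine Finset.sup_le fun i _ => ?_
      refine le_trans (totalDegree_mul _ _) ?_
      simpa using le_trans (lagPoly_totalDegree X i) hdm
    · ext j
      simp only [L, LinearMap.coe_mk, AddHom.coe_mk, map_sum, map_mul, eval_C]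
      rw [Finset.sum_eq_single j]
      · rw [lagPoly_eval_self X hX, mul_one]
      · intro i _ hij
        rw [lagPoly_eval_ne X hX (Ne.symm hij), mul_zero]
      · simp
  -- cardinality identity
  have hquot : Nat.card (M ⧸ LinearMap.ker L) = Nat.card (Fin m → F) :=
    Nat.card_congr (L.quotKerEquivOfSurjective hLsurj).toEquiv
  have hcard : Nat.card M = Nat.card (Fin m → F) * Nat.card (LinearMap.ker L) := by
    rw [Submodule.card_eq_card_quotient_mul_card (LinearMap.ker L), hquot]
    exact mul_comm _ _
  -- identify the two sets with types
  have h1 : {f : MvPolynomial (Fin t) F | f.totalDegree ≤ d}.ncard = Nat.card M := by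
    rw [← Nat.card_coe_set_eq]
    refine Nat.card_congr (Equiv.setCongr ?_).symm
    ext f
    exact mem_restrictTotalDegree _ _ _
  have h2 : {f : MvPolynomial (Fin t) F | f.totalDegree ≤ d ∧
      ∀ i : Fin m, MvPolynomial.eval (X i) f = 0}.ncard = Nat.card (LinearMap.ker L) := by
    rw [← Nat.card_coe_set_eq]
    refine Nat.card_congr ?_
    refine { toFun := fun f => ⟨⟨f.1, (mem_restrictTotalDegree _ _ _).mpr f.2.1⟩, ?_⟩,
             invFun := fun g => ⟨g.1.1, (mem_restrictTotalDegree _ _ _).mp g.1.2, fun i => ?_⟩,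
             left_inv := fun f => rfl,
             right_inv := fun g => rfl }
    · rw [LinearMap.mem_ker]
      ext i
      exact f.2.2 i
    · have := g.2
      rw [LinearMap.mem_ker] at this
      exact congrFun this i
  rw [h1, h2, hcard]
  have h3 : Nat.card (Fin m → F) = Fintype.card F ^ m := by simp
  rw [h3, mul_comm]
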